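/- Let (X, ◁) be a quandle (a rack with x ◁ x = x for all x) whose permutation group G(X, ◁) = ⟨λ_x : x ∈ X⟩ ⊆ Sym(X) is nilpotent of class n, where λ_x(y) = y ◁ x. Then the structure group G(X, ◁) = gr(X | x ∘ y = (y ◁ x) ∘ x) satisfies the Malcev identity x_{n+1} = y_{n+1}; i.e., G(X, ◁) is nilpotent of class at most n + 1. -/

import Mathlib

/-- Malcev's words: `(x₀, y₀) = (a, b)` and `x_{k+1} = x_k z_{k+1} y_k`,
`y_{k+1} = y_k z_{k+1} x_k`. A group is nilpotent of class `n` iff it satisfies the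
identity `x_n = y_n`. -/
def malcev {G : Type*} [Group G] (a b : G) (c : ℕ → G) : ℕ → G × G
  | 0 => (a, b)
  | n + 1 =>
      ((malcev a b c n).1 * c (n + 1) * (malcev a b c n).2,
       (malcev a b c n).2 * c (n + 1) * (malcev a b c n).1)

/-- The defining relations of the structure group of the rack/quandle solution
`r(x, y) = (y ◁ x, x)`: `x ∘ y = (y ◁ x) ∘ x`. -/
def quandleRels {X : Type*} (op : X → X → X) : Set (FreeGroup X) :=
  {w | ∃ x y : X,
    w = FreeGroup.of x * FreeGroup.of y * (FreeGroup.of (op y x) * FreeGroup.of x)⁻¹}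

/-- A homomorphism commutes with the Malcev words. -/
lemma malcev_map {G H : Type*} [Group G] [Group H] (f : G →* H) (a b : G) (c : ℕ → G) :
    ∀ n : ℕ, f (malcev a b c n).1 = (malcev (f a) (f b) (f ∘ c) n).1 ∧
      f (malcev a b c n).2 = (malcev (f a) (f b) (f ∘ c) n).2 := by
  intro n
  induction n with
  | zero => simp [malcev]
  | succ n ih => simp [malcev, ih.1, ih.2]

/-- The key step: if `h⁻¹ * g` is central then `g * z * h = h * z * g`. -/
lemma malcev_step {G : Type*} [Group G] {g h : G} (hc : h⁻¹ * g ∈ Subgroup.center G)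
    (z : G) : g * z * h = h * z * g := by
  have hu := Subgroup.mem_center_iff.1 hc
  have hg : g = h * (h⁻¹ * g) := by group
  calc g * z * h = h * ((h⁻¹ * g) * z) * h := by rw [hg]; group
    _ = h * (z * (h⁻¹ * g)) * h := by rw [hu z]
    _ = h * z * ((h⁻¹ * g) * h) := by group
    _ = h * z * (h * (h⁻¹ * g)) := by rw [hu h]
    _ = h * z * g := by rw [← hg]

/-- A group that is nilpotent of class `n` satisfies the `n`-th Malcev identity. -/
lemma malcev_of_nilpotent : ∀ (n : ℕ) {G : Type*} [Group G],
    upperCentralSeries G n = ⊤ →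
    ∀ (a b : G) (c : ℕ → G), (malcev a b c n).1 = (malcev a b c n).2 := by
  intro n
  induction n with
  | zero =>
    intro G _ hnil a b c
    have ha : a ∈ (⊥ : Subgroup G) := by
      rw [show (⊥ : Subgroup G) = upperCentralSeries G 0 from (upperCentralSeries_zero G).symm,
        hnil]; trivial
    have hb : b ∈ (⊥ : Subgroup G) := by
      rw [show (⊥ : Subgroup G) = upperCentralSeries G 0 from (upperCentralSeries_zero G).symm,
        hnil]; trivial
    simp only [Subgroup.mem_bot] at ha hb
    simp [malcev, ha, hb]
  | succ n ih =>
    intro G _ hnil a b c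
    set f := QuotientGroup.mk' (Subgroup.center G)
    have hq : upperCentralSeries (G ⧸ Subgroup.center G) n = ⊤ := by
      have h1 : Subgroup.comap f (upperCentralSeries (G ⧸ Subgroup.center G) n) = ⊤ := by
        show Subgroup.comap f (Subgroup.upperCentralSeries _ n) = ⊤
        rw [comap_upperCentralSeries_quotient_center]; exact hnil
      have h2 := Subgroup.map_comap_eq_self_of_surjective
        (f := f) (QuotientGroup.mk'_surjective _)
        (H := upperCentralSeries (G ⧸ Subgroup.center G) n)
      rw [h1] at h2
      rw [← h2, ← MonoidHom.range_eq_map, MonoidHom.range_eq_top_of_surjective]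
      exact QuotientGroup.mk'_surjective _
    have hmq := ih hq (f a) (f b) (f ∘ c)
    rw [← (malcev_map f a b c n).1, ← (malcev_map f a b c n).2] at hmq
    have hcent : (malcev a b c n).2⁻¹ * (malcev a b c n).1 ∈ Subgroup.center G := by
      exact (QuotientGroup.eq (s := Subgroup.center G)
        (a := (malcev a b c n).2) (b := (malcev a b c n).1)).1 hmq.symm
    simp only [malcev]
    exact malcev_step hcent (c (n + 1))

/-- If `(X, ◁)` is a quandle whose permutation group `⟨λ_x : x ∈ X⟩ ≤ Sym(X)`
(`λ_x(y) = y ◁ x`) is nilpotent of class `n`, then the structure group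
`G(X, ◁) = gr(X ∣ x ∘ y = (y ◁ x) ∘ x)` satisfies the Malcev identity
`x_{n+1} = y_{n+1}`, i.e. it is nilpotent of class at most `n + 1`. -/
theorem quandle_structure_group_nilpotent {X : Type*} (op : X → X → X)
    (hsd : ∀ x y z, op (op x y) z = op (op x z) (op y z))
    (hbij : ∀ y, Function.Bijective fun x => op x y)
    (hquandle : ∀ x, op x x = x)
    (n : ℕ)
    (hnil : upperCentralSeries
      (↥(Subgroup.closure
        (Set.range fun t => Equiv.ofBijective (fun w => op w t) (hbij t)))) n = ⊤) :
    ∀ (a b : PresentedGroup (quandleRels op)) (c : ℕ → PresentedGroup (quandleRels op)),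
      (malcev a b c (n + 1)).1 = (malcev a b c (n + 1)).2 := by
  intro a b c
  set Γ := Subgroup.closure
      (Set.range fun t => Equiv.ofBijective (fun w => op w t) (hbij t)) with hΓ
  -- the map to the permutation group
  set lam : X → Γ := fun t => ⟨Equiv.ofBijective (fun w => op w t) (hbij t),
    Subgroup.subset_closure ⟨t, rfl⟩⟩ with hlam
  have hrels : ∀ r ∈ quandleRels op, FreeGroup.lift lam r = 1 := by
    rintro r ⟨x, y, rfl⟩
    simp only [map_mul, map_inv, FreeGroup.lift_apply_of]
    rw [mul_inv_eq_one]
    ext w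
    show op (op w y) x = op (op w x) (op y x)
    exact hsd w y x
  set π : PresentedGroup (quandleRels op) →* Γ := PresentedGroup.toGroup hrels with hπ
  set π' : PresentedGroup (quandleRels op) →* Equiv.Perm X := Γ.subtype.comp π with hπ'
  -- relation in the presented group
  have hrel : ∀ x y : X, PresentedGroup.of (rels := quandleRels op) x * PresentedGroup.of y
      = PresentedGroup.of (op y x) * PresentedGroup.of x := by
    intro x y
    have : (QuotientGroup.mk (FreeGroup.of x * FreeGroup.of y *
        (FreeGroup.of (op y x) * FreeGroup.of x)⁻¹ : FreeGroup X) :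
        PresentedGroup (quandleRels op)) = 1 :=
      (QuotientGroup.eq_one_iff _).2 (Subgroup.subset_normalClosure ⟨x, y, rfl⟩)
    rw [QuotientGroup.mk_mul, QuotientGroup.mk_inv, QuotientGroup.mk_mul,
      QuotientGroup.mk_mul, mul_inv_eq_one] at this
    exact this
  -- conjugation acts through π'
  have hconj : ∀ g : PresentedGroup (quandleRels op), ∀ y : X,
      g * PresentedGroup.of y = PresentedGroup.of (π' g y) * g := by
    intro g
    have hgen : g ∈ Subgroup.closure (Set.range
        (PresentedGroup.of : X → PresentedGroup (quandleRels op))) := by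
      rw [PresentedGroup.closure_range_of]; trivial
    refine Subgroup.closure_induction ?_ ?_ ?_ ?_ hgen
    · rintro _ ⟨x, rfl⟩ y
      have h1 : π' (PresentedGroup.of x) = lam x := by
        rw [hπ']
        simp only [MonoidHom.comp_apply]
        rw [hπ, PresentedGroup.toGroup.of]
        rfl
      rw [h1]
      show PresentedGroup.of x * PresentedGroup.of y = PresentedGroup.of (op y x) * _
      exact hrel x y
    · intro y; simp
    · intro g h _ _ hg hh y
      calc g * h * PresentedGroup.of y = g * (PresentedGroup.of (π' h y) * h) := by
            rw [mul_assoc, hh y]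
        _ = (PresentedGroup.of (π' g (π' h y)) * g) * h := by rw [← mul_assoc, hg _]
        _ = PresentedGroup.of (π' (g * h) y) * (g * h) := by
            rw [map_mul, Equiv.Perm.mul_apply, mul_assoc]
    · intro g _ hg y
      have key := hg ((π' g)⁻¹ y)
      rw [show π' g ((π' g)⁻¹ y) = y from (π' g).apply_symm_apply y] at key
      rw [map_inv]
      calc g⁻¹ * PresentedGroup.of y
          = g⁻¹ * (PresentedGroup.of y * g) * g⁻¹ := by group
        _ = g⁻¹ * (g * PresentedGroup.of ((π' g)⁻¹ y)) * g⁻¹ := by rw [← key]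
        _ = PresentedGroup.of ((π' g)⁻¹ y) * g⁻¹ := by group
  -- elements with equal π'-image differ by a central element
  have hker : ∀ g h : PresentedGroup (quandleRels op), π' g = π' h →
      h⁻¹ * g ∈ Subgroup.center (PresentedGroup (quandleRels op)) := by
    intro g h hgh
    rw [Subgroup.mem_center_iff]
    intro m
    have key : ∀ m : PresentedGroup (quandleRels op), g * m * g⁻¹ = h * m * h⁻¹ := by
      intro m
      have hm : m ∈ Subgroup.closure (Set.range
          (PresentedGroup.of : X → PresentedGroup (quandleRels op))) := by
        rw [PresentedGroup.closure_range_of]; trivial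
      refine Subgroup.closure_induction ?_ ?_ ?_ ?_ hm
      · rintro _ ⟨y, rfl⟩
        calc g * PresentedGroup.of y * g⁻¹
            = PresentedGroup.of (π' g y) * g * g⁻¹ := by rw [hconj g y]
          _ = PresentedGroup.of (π' h y) := by rw [hgh]; group
          _ = PresentedGroup.of (π' h y) * h * h⁻¹ := by group
          _ = h * PresentedGroup.of y * h⁻¹ := by rw [← hconj h y]
      · simp
      · intro p q _ _ hp hq
        calc g * (p * q) * g⁻¹ = (g * p * g⁻¹) * (g * q * g⁻¹) := by group
          _ = (h * p * h⁻¹) * (h * q * h⁻¹) := by rw [hp, hq]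
          _ = h * (p * q) * h⁻¹ := by group
      · intro p _ hp
        calc g * p⁻¹ * g⁻¹ = (g * p * g⁻¹)⁻¹ := by group
          _ = (h * p * h⁻¹)⁻¹ := by rw [hp]
          _ = h * p⁻¹ * h⁻¹ := by group
    calc m * (h⁻¹ * g) = h⁻¹ * (h * m * h⁻¹) * g := by group
      _ = h⁻¹ * (g * m * g⁻¹) * g := by rw [key m]
      _ = h⁻¹ * g * m := by group
  -- π of the n-th Malcev words agree since Γ is nilpotent of class n
  have hmal := malcev_of_nilpotent n hnil (π a) (π b) (π ∘ c)
  rw [← (malcev_map π a b c n).1, ← (malcev_map π a b c n).2] at hmal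
  have hmal' : π' (malcev a b c n).1 = π' (malcev a b c n).2 := by
    rw [hπ']; simp only [MonoidHom.comp_apply, hmal]
  have hc := hker _ _ hmal'
  simp only [malcev]
  exact malcev_step hc (c (n + 1))
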